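/- Suppose u ∈ ℝ^d is an r-sparse unit vector with r ≥ s, V ∈ ℝ^{d×k} has orthonormal columns, ‖Vᵀu‖₂² ≥ 1 − Δ for some Δ ∈ (0, 1/2), and the columns of V are jointly supported on at most s coordinates. Then the normalized s-truncation w = top_s(u)/‖top_s(u)‖₂ satisfies ‖Vᵀw‖₂² ≥ 1 − 5Δ. -/
import Mathlib
set_option maxHeartbeats 1000000


open Matrix Finset

private lemma sum_proj_residual {d k : ℕ} (V : Matrix (Fin d) (Fin k) ℝ)
    (horth : ∀ j j' : Fin k, ∑ i, V i j * V i j' = if j = j' then (1:ℝ) else 0)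
    (x : Fin d → ℝ) :
    ∑ i, (x i - ∑ j, V i j * (∑ l, V l j * x l)) ^ 2
      = ∑ i, x i ^ 2 - ∑ j, (∑ l, V l j * x l) ^ 2 := by
  set z : Fin k → ℝ := fun j => ∑ l, V l j * x l with hz
  have h1 : ∑ i, x i * (∑ j, V i j * z j) = ∑ j, z j ^ 2 := by
    calc ∑ i, x i * (∑ j, V i j * z j)
        = ∑ i, ∑ j, x i * (V i j * z j) :=
          Finset.sum_congr rfl fun i _ => Finset.mul_sum _ _ _
      _ = ∑ j, ∑ i, x i * (V i j * z j) := Finset.sum_comm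
      _ = ∑ j, z j * ∑ l, V l j * x l := by
          refine Finset.sum_congr rfl fun j _ => ?_
          rw [Finset.mul_sum]
          exact Finset.sum_congr rfl fun i _ => by ring
      _ = ∑ j, z j ^ 2 := by
          refine Finset.sum_congr rfl fun j _ => ?_
          show z j * z j = z j ^ 2
          rw [sq]
  have h2 : ∑ i, (∑ j, V i j * z j) ^ 2 = ∑ j, z j ^ 2 := by
    calc ∑ i, (∑ j, V i j * z j) ^ 2
        = ∑ i, ∑ j, ∑ j', (V i j * z j) * (V i j' * z j') := by
          refine Finset.sum_congr rfl fun i _ => ?_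
          rw [sq, Finset.sum_mul_sum]
      _ = ∑ j, ∑ j', (z j * z j') * ∑ i, V i j * V i j' := by
          rw [Finset.sum_comm]
          refine Finset.sum_congr rfl fun j _ => ?_
          rw [Finset.sum_comm]
          refine Finset.sum_congr rfl fun j' _ => ?_
          rw [Finset.mul_sum]
          exact Finset.sum_congr rfl fun i _ => by ring
      _ = ∑ j, z j ^ 2 := by
          simp only [horth, mul_ite, mul_one, mul_zero]
          simp [Finset.sum_ite_eq, sq]
  have h3 : ∑ i, (x i - ∑ j, V i j * z j) ^ 2
      = ∑ i, x i ^ 2 - 2 * ∑ i, x i * (∑ j, V i j * z j) + ∑ i, (∑ j, V i j * z j) ^ 2 := by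
    rw [Finset.mul_sum, ← Finset.sum_sub_distrib, ← Finset.sum_add_distrib]
    exact Finset.sum_congr rfl fun i _ => by ring
  rw [h3, h1, h2]
  ring

/-- Normalized `s`-truncation of an approximately-aligned `r`-sparse unit
vector remains aligned. If `u` is an `r`-sparse unit vector with `r ≥ s`,
`V` has orthonormal columns jointly supported on at most `s` coordinates,
`‖Vᵀu‖² ≥ 1 − Δ` with `Δ ∈ (0, 1/2)`, and `F` is any set of `s` coordinates of
largest magnitude of `u` (so `top_s u` keeps exactly the coordinates in `F`),
then `w = top_s(u)/‖top_s(u)‖` satisfies `‖Vᵀw‖² ≥ 1 − 5Δ`. -/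
theorem truncation_to_proper_hypothesis {d k s r : ℕ} (hsr : s ≤ r)
    (V : Matrix (Fin d) (Fin k) ℝ) (hV : Vᵀ * V = 1)
    (hVsupp : {i : Fin d | ∃ j, V i j ≠ 0}.ncard ≤ s)
    (u : Fin d → ℝ) (hu : ∑ i, u i ^ 2 = 1)
    (hur : {i : Fin d | u i ≠ 0}.ncard ≤ r)
    (Δ : ℝ) (hΔ : Δ ∈ Set.Ioo (0 : ℝ) (1 / 2))
    (hcorr : ∑ j, (∑ i, V i j * u i) ^ 2 ≥ 1 - Δ)
    (F : Finset (Fin d)) (hF : F.card = s)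
    (hFtop : ∀ i ∈ F, ∀ j ∉ F, |u j| ≤ |u i|) :
    ∑ j, (∑ i ∈ F, V i j * u i) ^ 2 / (∑ i ∈ F, u i ^ 2) ≥ 1 - 5 * Δ := by
  classical
  obtain ⟨hΔ0, hΔ2⟩ := hΔ
  -- the joint support of the columns of V
  set S : Finset (Fin d) := Finset.univ.filter (fun i => ∃ j, V i j ≠ 0) with hSdef
  have hScard : S.card ≤ s := by
    have : {i : Fin d | ∃ j, V i j ≠ 0}.ncard = S.card := by
      simp [Set.ncard_eq_toFinset_card', Set.toFinset_setOf, hSdef]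
    omega
  have hV0 : ∀ i, i ∉ S → ∀ j, V i j = 0 := by
    intro i hi j
    by_contra h
    exact hi (by simp [hSdef]; exact ⟨j, h⟩)
  have horth : ∀ j j' : Fin k, ∑ i, V i j * V i j' = if j = j' then (1:ℝ) else 0 := by
    intro j j'
    have := congrFun (congrFun hV j) j'
    simpa [Matrix.mul_apply, Matrix.transpose_apply, Matrix.one_apply] using this
  -- restricted vectors
  set xS : Fin d → ℝ := fun i => if i ∈ S then u i else 0 with hxS
  set xFS : Fin d → ℝ := fun i => if i ∈ F ∩ S then u i else 0 with hxFS
  set xSF : Fin d → ℝ := fun i => if i ∈ S \ F then u i else 0 with hxSF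
  -- scalar quantities
  set α : ℝ := ∑ i ∈ F ∩ S, u i ^ 2 with hα
  set β : ℝ := ∑ i ∈ F \ S, u i ^ 2 with hβ
  set γ : ℝ := ∑ i ∈ S \ F, u i ^ 2 with hγ
  set QS : ℝ := ∑ j, (∑ i ∈ S, V i j * u i) ^ 2 with hQS
  set QF : ℝ := ∑ j, (∑ i ∈ F, V i j * u i) ^ 2 with hQF
  have hα0 : 0 ≤ α := Finset.sum_nonneg fun i _ => sq_nonneg _
  have hβ0 : 0 ≤ β := Finset.sum_nonneg fun i _ => sq_nonneg _
  have hγ0 : 0 ≤ γ := Finset.sum_nonneg fun i _ => sq_nonneg _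
  have hQF0 : 0 ≤ QF := Finset.sum_nonneg fun j _ => sq_nonneg _
  -- sum reductions
  have hVsum : ∀ (T : Finset (Fin d)) (j : Fin k),
      ∑ i, V i j * (if i ∈ T then u i else 0) = ∑ i ∈ T, V i j * u i := by
    intro T j
    simp only [mul_ite, mul_zero]
    rw [Finset.sum_ite_mem, Finset.univ_inter]
  have hsq : ∀ (T : Finset (Fin d)),
      ∑ i, (if i ∈ T then u i else 0) ^ 2 = ∑ i ∈ T, u i ^ 2 := by
    intro T
    have : ∀ i, (if i ∈ T then u i else 0) ^ 2 = if i ∈ T then u i ^ 2 else 0 := by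
      intro i; split <;> simp
    rw [Finset.sum_congr rfl fun i _ => this i, Finset.sum_ite_mem, Finset.univ_inter]
  have hredF : ∀ j, ∑ i ∈ F, V i j * u i = ∑ i ∈ F ∩ S, V i j * u i := by
    intro j
    refine (Finset.sum_subset Finset.inter_subset_left ?_).symm
    intro i hiF hni
    have hiS : i ∉ S := fun hiS => hni (Finset.mem_inter.mpr ⟨hiF, hiS⟩)
    rw [hV0 i hiS j, zero_mul]
  have hredU : ∀ j, ∑ i, V i j * u i = ∑ i ∈ S, V i j * u i := by
    intro j
    refine (Finset.sum_subset (Finset.subset_univ S) ?_).symm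
    intro i _ hni
    rw [hV0 i hni j, zero_mul]
  have hQS1 : 1 - Δ ≤ QS := by
    rw [hQS]
    calc (1:ℝ) - Δ ≤ ∑ j, (∑ i, V i j * u i) ^ 2 := hcorr
      _ = ∑ j, (∑ i ∈ S, V i j * u i) ^ 2 := by
          exact Finset.sum_congr rfl fun j _ => by rw [hredU j]
  -- residual vectors
  set f : Fin d → ℝ := fun i => xS i - ∑ j, V i j * (∑ l, V l j * xS l) with hf
  set h : Fin d → ℝ := fun i => xSF i - ∑ j, V i j * (∑ l, V l j * xSF l) with hh
  set m : ℝ := ∑ i, f i ^ 2 with hm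
  set e : ℝ := ∑ i, h i ^ 2 with he
  set B : ℝ := ∑ i, f i * h i with hB
  have hm0 : 0 ≤ m := Finset.sum_nonneg fun i _ => sq_nonneg _
  have he0 : 0 ≤ e := Finset.sum_nonneg fun i _ => sq_nonneg _
  -- m = (α + γ) - QS
  have hm_eq : m = (α + γ) - QS := by
    rw [hm, hf]
    rw [sum_proj_residual V horth xS]
    congr 1
    · rw [hxS, hsq S]
      rw [hα, hγ, ← Finset.sum_inter_add_sum_sdiff S F (fun i => u i ^ 2), Finset.inter_comm]
    · rw [hQS]
      exact Finset.sum_congr rfl fun j _ => by rw [hxS, hVsum S j]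
  -- e ≤ γ
  have he_le : e ≤ γ := by
    rw [he, hh, sum_proj_residual V horth xSF]
    have h1 : ∑ i, xSF i ^ 2 = γ := by rw [hxSF, hsq (S \ F), hγ]
    have h2 : 0 ≤ ∑ j, (∑ l, V l j * xSF l) ^ 2 :=
      Finset.sum_nonneg fun j _ => sq_nonneg _
    linarith
  -- α - QF = m + e - 2B
  have hpoint : ∀ i, xFS i = xS i - xSF i := by
    intro i
    rw [hxFS, hxS, hxSF]
    by_cases hiS : i ∈ S <;> by_cases hiF : i ∈ F <;>
      simp [Finset.mem_inter, Finset.mem_sdiff, hiS, hiF]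
  have hlin : ∀ i, (xFS i - ∑ j, V i j * (∑ l, V l j * xFS l)) = f i - h i := by
    intro i
    rw [hf, hh]
    have : ∀ j, ∑ l, V l j * xFS l = (∑ l, V l j * xS l) - (∑ l, V l j * xSF l) := by
      intro j
      rw [← Finset.sum_sub_distrib]
      exact Finset.sum_congr rfl fun l _ => by rw [hpoint l]; ring
    simp only [hpoint i, this, mul_sub, Finset.sum_sub_distrib]
    ring
  have hRF : α - QF = m + e - 2 * B := by
    have h1 : ∑ i, (xFS i - ∑ j, V i j * (∑ l, V l j * xFS l)) ^ 2 = α - QF := by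
      rw [sum_proj_residual V horth xFS]
      congr 1
      · rw [hxFS, hsq (F ∩ S), hα]
      · rw [hQF]
        refine Finset.sum_congr rfl fun j _ => ?_
        rw [hxFS, hVsum (F ∩ S) j, hredF j]
    rw [← h1]
    calc ∑ i, (xFS i - ∑ j, V i j * (∑ l, V l j * xFS l)) ^ 2
        = ∑ i, (f i - h i) ^ 2 := Finset.sum_congr rfl fun i _ => by rw [hlin i]
      _ = ∑ i, f i ^ 2 - 2 * ∑ i, f i * h i + ∑ i, h i ^ 2 := by
          rw [Finset.mul_sum, ← Finset.sum_sub_distrib, ← Finset.sum_add_distrib]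
          exact Finset.sum_congr rfl fun i _ => by ring
      _ = m + e - 2 * B := by rw [← hm, ← he, ← hB]; ring
  -- Cauchy–Schwarz
  have hCS : B ^ 2 ≤ m * e := by
    rw [hB, hm, he]
    exact Finset.sum_mul_sq_le_sq_mul_sq Finset.univ f h
  -- γ ≤ β (top-s property)
  have hγβ : γ ≤ β := by
    rw [hγ, hβ]
    have hcard : (S \ F).card ≤ (F \ S).card := by
      have h1 : (S \ F).card + (S ∩ F).card = S.card := Finset.card_sdiff_add_card_inter S F
      have h2 : (F \ S).card + (F ∩ S).card = F.card := Finset.card_sdiff_add_card_inter F S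
      have h3 : (S ∩ F).card = (F ∩ S).card := by rw [Finset.inter_comm]
      omega
    rcases Finset.eq_empty_or_nonempty (F \ S) with hemp | hne
    · have h0 : (S \ F) = ∅ := by
        rw [hemp] at hcard
        exact Finset.card_eq_zero.mp (by simpa using hcard)
      simp [h0, hemp]
    · obtain ⟨i₀, hi₀mem, hi₀min⟩ := Finset.exists_min_image (F \ S) (fun i => u i ^ 2) hne
      have hi₀F : i₀ ∈ F := (Finset.mem_sdiff.mp hi₀mem).1
      have hstep : ∀ j ∈ S \ F, u j ^ 2 ≤ u i₀ ^ 2 := by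
        intro j hj
        have hjF : j ∉ F := (Finset.mem_sdiff.mp hj).2
        have habs := hFtop i₀ hi₀F j hjF
        calc u j ^ 2 = |u j| ^ 2 := (sq_abs _).symm
          _ ≤ |u i₀| ^ 2 := pow_le_pow_left₀ (abs_nonneg _) habs 2
          _ = u i₀ ^ 2 := sq_abs _
      calc ∑ i ∈ S \ F, u i ^ 2 ≤ ∑ _i ∈ S \ F, u i₀ ^ 2 := Finset.sum_le_sum hstep
        _ = (S \ F).card * u i₀ ^ 2 := by rw [Finset.sum_const, nsmul_eq_mul]
        _ ≤ (F \ S).card * u i₀ ^ 2 := by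
            apply mul_le_mul_of_nonneg_right _ (sq_nonneg _)
            exact_mod_cast Nat.cast_le.mpr hcard
        _ = ∑ _i ∈ F \ S, u i₀ ^ 2 := by rw [Finset.sum_const, nsmul_eq_mul]
        _ ≤ ∑ i ∈ F \ S, u i ^ 2 := Finset.sum_le_sum fun i hi => hi₀min i hi
  -- partition bounds
  have haF : ∑ i ∈ F, u i ^ 2 = α + β := by
    rw [hα, hβ, Finset.sum_inter_add_sum_sdiff F S (fun i => u i ^ 2)]
  have hpart : α + β + γ ≤ 1 := by
    have hdisj : Disjoint F (S \ F) := Finset.disjoint_sdiff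
    have hunion : ∑ i ∈ F ∪ (S \ F), u i ^ 2 = (α + β) + γ := by
      rw [Finset.sum_union hdisj, haF, hγ]
    have hle : ∑ i ∈ F ∪ (S \ F), u i ^ 2 ≤ ∑ i, u i ^ 2 :=
      Finset.sum_le_sum_of_subset_of_nonneg (Finset.subset_univ _)
        (fun i _ _ => sq_nonneg _)
    rw [hunion, hu] at hle
    linarith
  -- key scalar inequality:  0 ≤ 2m + e/2 + 2B
  have hw : 0 ≤ 2 * m + e / 2 + 2 * B := by
    rcases eq_or_lt_of_le he0 with he0' | he0'
    · have heq : e = 0 := he0'.symm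
      have hBB : B ^ 2 = 0 := by
        have h1 : B ^ 2 ≤ 0 := by rw [heq, mul_zero] at hCS; exact hCS
        exact le_antisymm h1 (sq_nonneg B)
      have hB0 : B = 0 := (pow_eq_zero_iff two_ne_zero).mp hBB
      rw [hB0, heq]
      linarith
    · nlinarith [sq_nonneg (B + e / 2), mul_pos he0' he0']
  -- denominator is positive
  have hden : (0:ℝ) < α + β := by nlinarith
  -- conclude
  rw [ge_iff_le, ← Finset.sum_div, ← hQF, haF, le_div_iff₀ hden]
  have P1 : 0 ≤ γ * (1 / 2 - Δ) := mul_nonneg hγ0 (by linarith)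
  have P2 : 0 ≤ (1 - α - β - γ) * (3 - 5 * Δ) :=
    mul_nonneg (by linarith) (by linarith)
  nlinarith [hRF, hm_eq, hQS1, hγβ, hpart, hw, he_le, hm0, he0, hQF0, P1, P2]
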